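/- Let (V, g, J) be a 2m-dimensional real inner product space with compatible complex structure, m ≥ 3, and let R be a Kähler-type algebraic curvature tensor. Define F(e_1,...,e_m) = Σ_{i=1}^m R(e_i, Je_i, Je_i, e_i) for J-adapted orthonormal bases. If F is independent of the choice of basis, then for all unit vectors x, y, z spanning an antiholomorphic 3-plane, R(x, Jx, y, z) = 2 R(x, y, Jx, z). -/

import Mathlib

open scoped RealInnerProductSpace

/-- A compatible (orthogonal) complex structure on a real inner product space. -/
def IsComplexStructure {V : Type*} [NormedAddCommGroup V] [InnerProductSpace ℝ V]
    (J : V →ₗ[ℝ] V) : Prop :=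
  (∀ x, J (J x) = -x) ∧ ∀ x y : V, ⟪J x, J y⟫ = ⟪x, y⟫

/-- A (0,4) curvature-type tensor. -/
abbrev CurvTensor (V : Type*) [NormedAddCommGroup V] [InnerProductSpace ℝ V] :=
  V →ₗ[ℝ] V →ₗ[ℝ] V →ₗ[ℝ] V →ₗ[ℝ] ℝ

/-- An algebraic curvature tensor of Kähler type. -/
structure IsKahlerCurv {V : Type*} [NormedAddCommGroup V] [InnerProductSpace ℝ V]
    (J : V →ₗ[ℝ] V) (R : CurvTensor V) : Prop where
  skew₁ : ∀ x y z u, R x y z u = - R y x z u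
  skew₂ : ∀ x y z u, R x y z u = - R x y u z
  symm : ∀ x y z u, R x y z u = R z u x y
  bianchi : ∀ x y z u, R x y z u + R y z x u + R z x y u = 0
  kahler : ∀ x y z u, R x y z u = R x y (J z) (J u)

/-- The Ricci tensor of an algebraic curvature tensor. -/
noncomputable def ricciT {V : Type*} [NormedAddCommGroup V] [InnerProductSpace ℝ V]
    [FiniteDimensional ℝ V] (R : CurvTensor V) (y z : V) : ℝ :=
  ∑ i, R (stdOrthonormalBasis ℝ V i) y z (stdOrthonormalBasis ℝ V i)

/-- The scalar curvature of an algebraic curvature tensor. -/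
noncomputable def scalarT {V : Type*} [NormedAddCommGroup V] [InnerProductSpace ℝ V]
    [FiniteDimensional ℝ V] (R : CurvTensor V) : ℝ :=
  ∑ i, ricciT R (stdOrthonormalBasis ℝ V i) (stdOrthonormalBasis ℝ V i)

/-- The Bochner curvature tensor of a Kähler-type curvature tensor
(`2 * m` is the dimension). -/
noncomputable def bochnerT {V : Type*} [NormedAddCommGroup V] [InnerProductSpace ℝ V]
    [FiniteDimensional ℝ V] (m : ℕ) (J : V →ₗ[ℝ] V) (R : CurvTensor V)
    (x y z u : V) : ℝ :=
  R x y z u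
  - (1 / (2 * ((m : ℝ) + 2))) *
      ( ⟪x, u⟫ * ricciT R y z - ⟪x, z⟫ * ricciT R y u
      + ⟪y, z⟫ * ricciT R x u - ⟪y, u⟫ * ricciT R x z
      + ⟪x, J u⟫ * ricciT R y (J z) - ⟪x, J z⟫ * ricciT R y (J u)
      + ⟪y, J z⟫ * ricciT R x (J u) - ⟪y, J u⟫ * ricciT R x (J z)
      - 2 * ⟪x, J y⟫ * ricciT R z (J u) - 2 * ⟪z, J u⟫ * ricciT R x (J y) )
  + (scalarT R / (4 * ((m : ℝ) + 1) * ((m : ℝ) + 2))) *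
      ( ⟪x, u⟫ * ⟪y, z⟫ - ⟪x, z⟫ * ⟪y, u⟫
      + ⟪x, J u⟫ * ⟪y, J z⟫ - ⟪x, J z⟫ * ⟪y, J u⟫
      - 2 * ⟪x, J y⟫ * ⟪z, J u⟫ )

/-- `x, Jx, y, Jy, z, Jz` are pairwise orthogonal, i.e. `x, y, z` span an
antiholomorphic 3-plane. -/
def AntiholoTriple {V : Type*} [NormedAddCommGroup V] [InnerProductSpace ℝ V]
    (J : V →ₗ[ℝ] V) (x y z : V) : Prop :=
  ⟪x, y⟫ = 0 ∧ ⟪x, z⟫ = 0 ∧ ⟪y, z⟫ = 0 ∧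
  ⟪x, J x⟫ = 0 ∧ ⟪y, J y⟫ = 0 ∧ ⟪z, J z⟫ = 0 ∧
  ⟪x, J y⟫ = 0 ∧ ⟪x, J z⟫ = 0 ∧ ⟪y, J z⟫ = 0

/-- A `J`-adapted orthonormal family `{e i, J (e i)}`. -/
def IsAdaptedBasis {V : Type*} [NormedAddCommGroup V] [InnerProductSpace ℝ V]
    (J : V →ₗ[ℝ] V) {m : ℕ} (e : Fin m → V) : Prop :=
  (∀ i j, ⟪e i, e j⟫ = if i = j then 1 else 0) ∧ ∀ i j, ⟪e i, J (e j)⟫ = 0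


section AuxLemmas

variable {V : Type*} [NormedAddCommGroup V] [InnerProductSpace ℝ V]

lemma J_inner_left {J : V →ₗ[ℝ] V} (hJ : IsComplexStructure J) (a b : V) :
    ⟪J a, b⟫ = - ⟪a, J b⟫ := by
  have h := hJ.2 a (J b)
  rw [hJ.1, inner_neg_right] at h
  linarith

lemma J_inner_self {J : V →ₗ[ℝ] V} (hJ : IsComplexStructure J) (a : V) :
    ⟪a, J a⟫ = 0 := by
  have h := J_inner_left hJ a a
  have h2 : ⟪J a, a⟫ = ⟪a, J a⟫ := real_inner_comm _ _
  linarith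

lemma kshift {J : V →ₗ[ℝ] V} {R : CurvTensor V} (hJ : IsComplexStructure J)
    (hR : IsKahlerCurv J R) (a b c d : V) :
    R a b (J c) d = - R a b c (J d) := by
  have h := hR.kahler a b c (J d)
  rw [hJ.1, map_neg] at h
  linarith

lemma exists_orth_unit {J : V →ₗ[ℝ] V} [FiniteDimensional ℝ V]
    {n : ℕ} (hn : 2 * n < Module.finrank ℝ V) (f : Fin n → V) :
    ∃ w : V, ‖w‖ = 1 ∧ ∀ i, ⟪f i, w⟫ = 0 ∧ ⟪J (f i), w⟫ = 0 := by
  classical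
  set b : Fin n ⊕ Fin n → V := Sum.elim f (fun i => J (f i)) with hb
  set S := Submodule.span ℝ (Set.range b) with hS
  have hrank : Module.finrank ℝ S ≤ 2 * n := by
    have h1 := finrank_range_le_card (R := ℝ) b
    simpa [Set.finrank, Fintype.card_sum, two_mul] using h1
  have hne : S ≠ ⊤ := by
    intro h
    rw [h, finrank_top] at hrank
    omega
  have hbot : Sᗮ ≠ ⊥ := by
    intro h
    exact hne (Submodule.orthogonal_eq_bot_iff.mp h)
  obtain ⟨v, hv, hv0⟩ := Submodule.exists_mem_ne_zero_of_ne_bot hbot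
  have hvorth : ∀ u ∈ S, ⟪u, v⟫ = 0 := (Submodule.mem_orthogonal S v).mp hv
  refine ⟨‖v‖⁻¹ • v, norm_smul_inv_norm hv0, fun i => ?_⟩
  constructor
  · rw [real_inner_smul_right, hvorth (f i) (Submodule.subset_span ⟨Sum.inl i, rfl⟩), mul_zero]
  · rw [real_inner_smul_right, hvorth (J (f i)) (Submodule.subset_span ⟨Sum.inr i, rfl⟩), mul_zero]

end AuxLemmas

section ExtLemma

variable {V : Type*} [NormedAddCommGroup V] [InnerProductSpace ℝ V]

lemma extend_adapted {J : V →ₗ[ℝ] V} [FiniteDimensional ℝ V] (hJ : IsComplexStructure J)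
    {m : ℕ} (hdim : Module.finrank ℝ V = 2 * m) :
    ∀ d k, m - k = d → ∀ (hk : k ≤ m) (f : Fin k → V), IsAdaptedBasis J f →
      ∃ g : Fin m → V, IsAdaptedBasis J g ∧ ∀ i : Fin k, g (Fin.castLE hk i) = f i := by
  intro d
  induction d with
  | zero =>
    intro k hd hk f hf
    have hkm : k = m := by omega
    subst hkm
    exact ⟨f, hf, fun i => by simp [Fin.castLE]⟩
  | succ d ih =>
    intro k hd hk f hf
    have hklt : k < m := by omega
    obtain ⟨w, hw1, hw2⟩ := exists_orth_unit (J := J) (by rw [hdim]; omega) f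
    have hww : ⟪w, w⟫ = 1 := by
      rw [real_inner_self_eq_norm_mul_norm, hw1, one_mul]
    have hadapt : IsAdaptedBasis J (Fin.snoc f w : Fin (k+1) → V) := by
      constructor
      · intro i j
        refine Fin.lastCases ?_ ?_ i
        · refine Fin.lastCases ?_ ?_ j
          · simp [Fin.snoc_last, hww, hw1]
          · intro j'
            have : Fin.last k ≠ Fin.castSucc j' := (Fin.castSucc_lt_last j').ne'
            simp only [Fin.snoc_last, Fin.snoc_castSucc, this, if_false]
            rw [real_inner_comm]
            exact (hw2 j').1
        · intro i'
          refine Fin.lastCases ?_ ?_ j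
          · have : Fin.castSucc i' ≠ Fin.last k := (Fin.castSucc_lt_last i').ne
            simp only [Fin.snoc_last, Fin.snoc_castSucc, this, if_false]
            exact (hw2 i').1
          · intro j'
            simp only [Fin.snoc_castSucc, Fin.castSucc_inj]
            exact hf.1 i' j'
      · intro i j
        refine Fin.lastCases ?_ ?_ i
        · refine Fin.lastCases ?_ ?_ j
          · simp only [Fin.snoc_last]
            exact J_inner_self hJ w
          · intro j'
            simp only [Fin.snoc_last, Fin.snoc_castSucc]
            rw [real_inner_comm]
            exact (hw2 j').2
        · intro i'
          refine Fin.lastCases ?_ ?_ j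
          · simp only [Fin.snoc_last, Fin.snoc_castSucc]
            have h1 := J_inner_left hJ (f i') w
            have h2 := (hw2 i').2
            linarith
          · intro j'
            simp only [Fin.snoc_castSucc]
            exact hf.2 i' j'
    obtain ⟨g, hg, hg2⟩ := ih (k+1) (by omega) (by omega) (Fin.snoc f w) hadapt
    refine ⟨g, hg, fun i => ?_⟩
    have hcast : Fin.castLE hk i = Fin.castLE (by omega : k + 1 ≤ m) (Fin.castSucc i) := by
      ext; simp
    rw [hcast, hg2 (Fin.castSucc i), Fin.snoc_castSucc]

end ExtLemma

section Sum3

variable {V : Type*} [NormedAddCommGroup V] [InnerProductSpace ℝ V]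

lemma sum3 {J : V →ₗ[ℝ] V} (hJ : IsComplexStructure J) {R : CurvTensor V}
    {m : ℕ} (hm : 3 ≤ m)
    (hF : ∀ e f : Fin m → V, IsAdaptedBasis J e → IsAdaptedBasis J f →
      ∑ i, R (e i) (J (e i)) (J (e i)) (e i) =
        ∑ i, R (f i) (J (f i)) (J (f i)) (f i))
    (g : Fin m → V) (hg : IsAdaptedBasis J g)
    (v w : Fin 3 → V)
    (hv1 : ∀ a b, ⟪v a, v b⟫ = if a = b then 1 else 0)
    (hv2 : ∀ a b, ⟪v a, J (v b)⟫ = 0)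
    (hw1 : ∀ a b, ⟪w a, w b⟫ = if a = b then 1 else 0)
    (hw2 : ∀ a b, ⟪w a, J (w b)⟫ = 0)
    (hvt : ∀ (a : Fin 3) (i : Fin m), ¬ (i : ℕ) < 3 → ⟪v a, g i⟫ = 0 ∧ ⟪v a, J (g i)⟫ = 0)
    (hwt : ∀ (a : Fin 3) (i : Fin m), ¬ (i : ℕ) < 3 → ⟪w a, g i⟫ = 0 ∧ ⟪w a, J (g i)⟫ = 0) :
    R (v 0) (J (v 0)) (J (v 0)) (v 0) + R (v 1) (J (v 1)) (J (v 1)) (v 1)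
      + R (v 2) (J (v 2)) (J (v 2)) (v 2)
    = R (w 0) (J (w 0)) (J (w 0)) (w 0) + R (w 1) (J (w 1)) (J (w 1)) (w 1)
      + R (w 2) (J (w 2)) (J (w 2)) (w 2) := by
  classical
  have main : ∀ u : Fin 3 → V,
      (∀ a b, ⟪u a, u b⟫ = if a = b then 1 else 0) →
      (∀ a b, ⟪u a, J (u b)⟫ = 0) →
      (∀ (a : Fin 3) (i : Fin m), ¬ (i : ℕ) < 3 → ⟪u a, g i⟫ = 0 ∧ ⟪u a, J (g i)⟫ = 0) →
      ∃ e : Fin m → V, IsAdaptedBasis J e ∧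
        ∑ i, R (e i) (J (e i)) (J (e i)) (e i)
          = R (u 0) (J (u 0)) (J (u 0)) (u 0) + R (u 1) (J (u 1)) (J (u 1)) (u 1)
            + R (u 2) (J (u 2)) (J (u 2)) (u 2)
            + ∑ i ∈ Finset.univ.filter (fun i : Fin m => ¬ (i : ℕ) < 3),
                R (g i) (J (g i)) (J (g i)) (g i) := by
    intro u hu1 hu2 hut
    refine ⟨fun i => if h : (i : ℕ) < 3 then u ⟨i, h⟩ else g i, ?_, ?_⟩
    · constructor
      · intro i j
        dsimp only
        by_cases hi : (i : ℕ) < 3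
        · by_cases hj : (j : ℕ) < 3
          · rw [dif_pos hi, dif_pos hj, hu1]
            simp [Fin.ext_iff]
          · rw [dif_pos hi, dif_neg hj, (hut ⟨i, hi⟩ j hj).1,
              if_neg (by simp only [Fin.ext_iff]; omega)]
        · by_cases hj : (j : ℕ) < 3
          · rw [dif_neg hi, dif_pos hj, real_inner_comm, (hut ⟨j, hj⟩ i hi).1,
              if_neg (by simp only [Fin.ext_iff]; omega)]
          · rw [dif_neg hi, dif_neg hj]
            exact hg.1 i j
      · intro i j
        dsimp only
        by_cases hi : (i : ℕ) < 3
        · by_cases hj : (j : ℕ) < 3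
          · rw [dif_pos hi, dif_pos hj]
            exact hu2 _ _
          · rw [dif_pos hi, dif_neg hj]
            exact (hut ⟨i, hi⟩ j hj).2
        · by_cases hj : (j : ℕ) < 3
          · rw [dif_neg hi, dif_pos hj]
            have h1 := J_inner_left hJ (u ⟨j, hj⟩) (g i)
            have h2 := real_inner_comm (g i) (J (u ⟨j, hj⟩))
            have h3 := (hut ⟨j, hj⟩ i hi).2
            linarith
          · rw [dif_neg hi, dif_neg hj]
            exact hg.2 i j
    · have hset : Finset.univ.filter (fun i : Fin m => (i : ℕ) < 3)
          = ({⟨0, by omega⟩, ⟨1, by omega⟩, ⟨2, by omega⟩} : Finset (Fin m)) := by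
        ext i
        simp [Fin.ext_iff]
        omega
      have e0 : (⟨0, by omega⟩ : Fin 3) = 0 := by simp [Fin.ext_iff]
      have e1 : (⟨1, by omega⟩ : Fin 3) = 1 := by simp [Fin.ext_iff]
      have e2 : (⟨2, by omega⟩ : Fin 3) = 2 := by simp [Fin.ext_iff]
      rw [← Finset.sum_filter_add_sum_filter_not Finset.univ (fun i : Fin m => (i : ℕ) < 3)]
      congr 1
      · rw [hset, Finset.sum_insert (by simp [Fin.ext_iff]),
          Finset.sum_insert (by simp [Fin.ext_iff]), Finset.sum_singleton]
        dsimp only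
        rw [dif_pos (show ((⟨0, by omega⟩ : Fin m) : ℕ) < 3 by simp),
          dif_pos (show ((⟨1, by omega⟩ : Fin m) : ℕ) < 3 by simp),
          dif_pos (show ((⟨2, by omega⟩ : Fin m) : ℕ) < 3 by simp)]
        simp only [e0, e1, e2]
        ring
      · refine Finset.sum_congr rfl fun i hi => ?_
        simp only [Finset.mem_filter] at hi
        simp only [dif_neg hi.2]
  obtain ⟨e, he, hesum⟩ := main v hv1 hv2 hvt
  obtain ⟨f, hf, hfsum⟩ := main w hw1 hw2 hwt
  have := hF e f he hf
  rw [hesum, hfsum] at this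
  linarith

end Sum3

section RotEq

variable {V : Type*} [NormedAddCommGroup V] [InnerProductSpace ℝ V]

lemma exp2L (p q : ℝ) (a b v : V) : ⟪p • a + q • b, v⟫ = p * ⟪a, v⟫ + q * ⟪b, v⟫ := by
  rw [inner_add_left, real_inner_smul_left, real_inner_smul_left]

lemma exp2R (p q : ℝ) (a b v : V) : ⟪v, p • a + q • b⟫ = p * ⟪v, a⟫ + q * ⟪v, b⟫ := by
  rw [inner_add_right, real_inner_smul_right, real_inner_smul_right]

lemma expJ2 (J : V →ₗ[ℝ] V) (p q : ℝ) (a b : V) :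
    J (p • a + q • b) = p • J a + q • J b := by
  rw [map_add, map_smul, map_smul]

lemma rot_eq {J : V →ₗ[ℝ] V} (hJ : IsComplexStructure J) {R : CurvTensor V}
    {m : ℕ} (hm : 3 ≤ m)
    (hF : ∀ e f : Fin m → V, IsAdaptedBasis J e → IsAdaptedBasis J f →
      ∑ i, R (e i) (J (e i)) (J (e i)) (e i) =
        ∑ i, R (f i) (J (f i)) (J (f i)) (f i))
    (g : Fin m → V) (hg : IsAdaptedBasis J g)
    (u w t : V) (c s : ℝ) (hc : c ^ 2 + s ^ 2 = 1)
    (huu : ⟪u, u⟫ = 1) (hww : ⟪w, w⟫ = 1) (htt : ⟪t, t⟫ = 1)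
    (huw : ⟪u, w⟫ = 0) (hut : ⟪u, t⟫ = 0) (hwt : ⟪w, t⟫ = 0)
    (hJuu : ⟪u, J u⟫ = 0) (hJww : ⟪w, J w⟫ = 0) (hJtt : ⟪t, J t⟫ = 0)
    (hJuw : ⟪u, J w⟫ = 0) (hJut : ⟪u, J t⟫ = 0) (hJwt : ⟪w, J t⟫ = 0)
    (tu : ∀ i : Fin m, ¬ (i : ℕ) < 3 → ⟪u, g i⟫ = 0 ∧ ⟪u, J (g i)⟫ = 0)
    (tw : ∀ i : Fin m, ¬ (i : ℕ) < 3 → ⟪w, g i⟫ = 0 ∧ ⟪w, J (g i)⟫ = 0)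
    (tt : ∀ i : Fin m, ¬ (i : ℕ) < 3 → ⟪t, g i⟫ = 0 ∧ ⟪t, J (g i)⟫ = 0) :
    R (c • u + s • w) (J (c • u + s • w)) (J (c • u + s • w)) (c • u + s • w)
      + R ((-s) • u + c • w) (J ((-s) • u + c • w)) (J ((-s) • u + c • w)) ((-s) • u + c • w)
      + R t (J t) (J t) t
    = R u (J u) (J u) u + R w (J w) (J w) w + R t (J t) (J t) t := by
  have comm : ∀ a b : V, ⟪a, b⟫ = ⟪b, a⟫ := fun a b => real_inner_comm b a
  have flip : ∀ a b : V, ⟪a, J b⟫ = - ⟪b, J a⟫ := by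
    intro a b
    have h1 := J_inner_left hJ b a
    have h2 := comm a (J b)
    linarith
  set e1 : V := c • u + s • w with he1
  set e2 : V := (-s) • u + c • w with he2
  have hwu : ⟪w, u⟫ = 0 := by rw [comm w u]; exact huw
  have htu : ⟪t, u⟫ = 0 := by rw [comm t u]; exact hut
  have htw : ⟪t, w⟫ = 0 := by rw [comm t w]; exact hwt
  have hJwu : ⟪w, J u⟫ = 0 := by rw [flip w u, hJuw]; ring
  have hJtu : ⟪t, J u⟫ = 0 := by rw [flip t u, hJut]; ring
  have hJtw : ⟪t, J w⟫ = 0 := by rw [flip t w, hJwt]; ring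
  have he11 : ⟪e1, e1⟫ = 1 := by
    rw [he1]; simp only [exp2L, exp2R, huu, hww, huw, hwu]; linear_combination hc
  have he22 : ⟪e2, e2⟫ = 1 := by
    rw [he2]; simp only [exp2L, exp2R, huu, hww, huw, hwu]; linear_combination hc
  have he12 : ⟪e1, e2⟫ = 0 := by
    rw [he1, he2]; simp only [exp2L, exp2R, huu, hww, huw, hwu]; ring
  have he1t : ⟪e1, t⟫ = 0 := by
    rw [he1]; simp only [exp2L, hut, hwt]; ring
  have he2t : ⟪e2, t⟫ = 0 := by
    rw [he2]; simp only [exp2L, hut, hwt]; ring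
  have hJe11 : ⟪e1, J e1⟫ = 0 := by
    rw [he1]; simp only [expJ2, exp2L, exp2R, hJuu, hJww, hJuw, hJwu]; ring
  have hJe22 : ⟪e2, J e2⟫ = 0 := by
    rw [he2]; simp only [expJ2, exp2L, exp2R, hJuu, hJww, hJuw, hJwu]; ring
  have hJe12 : ⟪e1, J e2⟫ = 0 := by
    rw [he1, he2]; simp only [expJ2, exp2L, exp2R, hJuu, hJww, hJuw, hJwu]; ring
  have hJe21 : ⟪e2, J e1⟫ = 0 := by
    rw [he1, he2]; simp only [expJ2, exp2L, exp2R, hJuu, hJww, hJuw, hJwu]; ring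
  have hJe1t : ⟪e1, J t⟫ = 0 := by
    rw [he1]; simp only [exp2L, hJut, hJwt]; ring
  have hJe2t : ⟪e2, J t⟫ = 0 := by
    rw [he2]; simp only [exp2L, hJut, hJwt]; ring
  have hJte1 : ⟪t, J e1⟫ = 0 := by rw [flip t e1, hJe1t]; ring
  have hJte2 : ⟪t, J e2⟫ = 0 := by rw [flip t e2, hJe2t]; ring
  have hte1 : ⟪t, e1⟫ = 0 := by rw [comm t e1]; exact he1t
  have hte2 : ⟪t, e2⟫ = 0 := by rw [comm t e2]; exact he2t
  have he21 : ⟪e2, e1⟫ = 0 := by rw [comm e2 e1]; exact he12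
  have key := sum3 hJ hm hF g hg ![e1, e2, t] ![u, w, t]
    (by
      intro a b
      fin_cases a <;> fin_cases b <;>
        simp [he11, he12, he1t, he21, he22, he2t, hte1, hte2, htt, -inner_self_eq_norm_sq_to_K])
    (by
      intro a b
      fin_cases a <;> fin_cases b <;>
        simp [hJe11, hJe12, hJe1t, hJe21, hJe22, hJe2t, hJte1, hJte2, hJtt])
    (by
      intro a b
      fin_cases a <;> fin_cases b <;>
        simp [huu, huw, hut, hwu, hww, hwt, htu, htw, htt, -inner_self_eq_norm_sq_to_K])
    (by
      intro a b
      fin_cases a <;> fin_cases b <;>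
        simp [hJuu, hJuw, hJut, hJwu, hJww, hJwt, hJtu, hJtw, hJtt])
    (by
      intro a i hi
      obtain ⟨q1, q2⟩ := tu i hi
      obtain ⟨q3, q4⟩ := tw i hi
      obtain ⟨q5, q6⟩ := tt i hi
      fin_cases a <;> refine ⟨?_, ?_⟩ <;>
        simp [he1, he2, inner_add_left, inner_neg_left, real_inner_smul_left, q1, q2, q3, q4, q5, q6])
    (by
      intro a i hi
      obtain ⟨q1, q2⟩ := tu i hi
      obtain ⟨q3, q4⟩ := tw i hi
      obtain ⟨q5, q6⟩ := tt i hi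
      fin_cases a <;> exact ⟨by simp [q1, q3, q5], by simp [q2, q4, q6]⟩)
  simpa using key

end RotEq

set_option maxHeartbeats 4000000 in
/-- If the sum `F(e₁,…,eₘ) = Σᵢ R(eᵢ,Jeᵢ,Jeᵢ,eᵢ)` is independent
of the `J`-adapted orthonormal basis, then `R(x,Jx,y,z) = 2·R(x,y,Jx,z)` for every
unit antiholomorphic triple. -/
theorem antiholo_identity_of_basis_independence
    {V : Type*} [NormedAddCommGroup V] [InnerProductSpace ℝ V]
    [FiniteDimensional ℝ V]
    (m : ℕ) (hm : 3 ≤ m) (hdim : Module.finrank ℝ V = 2 * m)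
    (J : V →ₗ[ℝ] V) (hJ : IsComplexStructure J)
    (R : CurvTensor V) (hR : IsKahlerCurv J R)
    (hF : ∀ e f : Fin m → V, IsAdaptedBasis J e → IsAdaptedBasis J f →
      ∑ i, R (e i) (J (e i)) (J (e i)) (e i) =
        ∑ i, R (f i) (J (f i)) (J (f i)) (f i)) :
    ∀ x y z : V, ‖x‖ = 1 → ‖y‖ = 1 → ‖z‖ = 1 → AntiholoTriple J x y z →
      R x (J x) y z = 2 * R x y (J x) z := by
  
  intro x y z hx hy hz hA
  obtain ⟨axy, axz, ayz, axJx, ayJy, azJz, axJy, axJz, ayJz⟩ := hA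
  have ip00 : ⟪x, x⟫ = 1 := by rw [real_inner_self_eq_norm_mul_norm, hx]; norm_num
  have ip01 : ⟪x, y⟫ = 0 := axy
  have ip02 : ⟪x, z⟫ = 0 := axz
  have ip03 : ⟪x, (J x)⟫ = 0 := axJx
  have ip04 : ⟪x, (J y)⟫ = 0 := axJy
  have ip05 : ⟪x, (J z)⟫ = 0 := axJz
  have ip10 : ⟪y, x⟫ = 0 := by rw [real_inner_comm]; exact axy
  have ip11 : ⟪y, y⟫ = 1 := by rw [real_inner_self_eq_norm_mul_norm, hy]; norm_num
  have ip12 : ⟪y, z⟫ = 0 := ayz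
  have ip13 : ⟪y, (J x)⟫ = 0 := by rw [real_inner_comm, J_inner_left hJ, axJy]; norm_num
  have ip14 : ⟪y, (J y)⟫ = 0 := ayJy
  have ip15 : ⟪y, (J z)⟫ = 0 := ayJz
  have ip20 : ⟪z, x⟫ = 0 := by rw [real_inner_comm]; exact axz
  have ip21 : ⟪z, y⟫ = 0 := by rw [real_inner_comm]; exact ayz
  have ip22 : ⟪z, z⟫ = 1 := by rw [real_inner_self_eq_norm_mul_norm, hz]; norm_num
  have ip23 : ⟪z, (J x)⟫ = 0 := by rw [real_inner_comm, J_inner_left hJ, axJz]; norm_num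
  have ip24 : ⟪z, (J y)⟫ = 0 := by rw [real_inner_comm, J_inner_left hJ, ayJz]; norm_num
  have ip25 : ⟪z, (J z)⟫ = 0 := azJz
  have ip30 : ⟪(J x), x⟫ = 0 := by rw [J_inner_left hJ, ip03]; norm_num
  have ip31 : ⟪(J x), y⟫ = 0 := by rw [J_inner_left hJ, ip04]; norm_num
  have ip32 : ⟪(J x), z⟫ = 0 := by rw [J_inner_left hJ, ip05]; norm_num
  have ip33 : ⟪(J x), (J x)⟫ = 1 := by rw [hJ.2]; exact ip00
  have ip34 : ⟪(J x), (J y)⟫ = 0 := by rw [hJ.2]; exact ip01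
  have ip35 : ⟪(J x), (J z)⟫ = 0 := by rw [hJ.2]; exact ip02
  have ip40 : ⟪(J y), x⟫ = 0 := by rw [J_inner_left hJ, ip13]; norm_num
  have ip41 : ⟪(J y), y⟫ = 0 := by rw [J_inner_left hJ, ip14]; norm_num
  have ip42 : ⟪(J y), z⟫ = 0 := by rw [J_inner_left hJ, ip15]; norm_num
  have ip43 : ⟪(J y), (J x)⟫ = 0 := by rw [hJ.2]; exact ip10
  have ip44 : ⟪(J y), (J y)⟫ = 1 := by rw [hJ.2]; exact ip11
  have ip45 : ⟪(J y), (J z)⟫ = 0 := by rw [hJ.2]; exact ip12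
  have ip50 : ⟪(J z), x⟫ = 0 := by rw [J_inner_left hJ, ip23]; norm_num
  have ip51 : ⟪(J z), y⟫ = 0 := by rw [J_inner_left hJ, ip24]; norm_num
  have ip52 : ⟪(J z), z⟫ = 0 := by rw [J_inner_left hJ, ip25]; norm_num
  have ip53 : ⟪(J z), (J x)⟫ = 0 := by rw [hJ.2]; exact ip20
  have ip54 : ⟪(J z), (J y)⟫ = 0 := by rw [hJ.2]; exact ip21
  have ip55 : ⟪(J z), (J z)⟫ = 1 := by rw [hJ.2]; exact ip22
  have hvb1 : ∀ a b : Fin 3, ⟪(![x, y, z] : Fin 3 → V) a, ![x, y, z] b⟫ = if a = b then 1 else 0 := by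
    intro a b; fin_cases a <;> fin_cases b <;> simp [ip00, ip01, ip02, ip10, ip11, ip12, ip20, ip21, ip22, -inner_self_eq_norm_sq_to_K]
  have hvb2 : ∀ a b : Fin 3, ⟪(![x, y, z] : Fin 3 → V) a, J (![x, y, z] b)⟫ = 0 := by
    intro a b; fin_cases a <;> fin_cases b <;> simp [ip03, ip04, ip05, ip13, ip14, ip15, ip23, ip24, ip25]
  obtain ⟨g, hg, hg3⟩ := extend_adapted hJ hdim (m - 3) 3 (by omega) hm ![x, y, z] ⟨hvb1, hvb2⟩
  have gx : g (Fin.castLE hm 0) = x := by simpa using hg3 0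
  have gy : g (Fin.castLE hm 1) = y := by simpa using hg3 1
  have gz : g (Fin.castLE hm 2) = z := by simpa using hg3 2
  have tailsix : ∀ i : Fin m, ¬ (i : ℕ) < 3 → ((⟪x, g i⟫ = 0 ∧ ⟪x, J (g i)⟫ = 0) ∧ (⟪y, g i⟫ = 0 ∧ ⟪y, J (g i)⟫ = 0) ∧ (⟪z, g i⟫ = 0 ∧ ⟪z, J (g i)⟫ = 0) ∧ (⟪(J x), g i⟫ = 0 ∧ ⟪(J x), J (g i)⟫ = 0) ∧ (⟪(J y), g i⟫ = 0 ∧ ⟪(J y), J (g i)⟫ = 0) ∧ (⟪(J z), g i⟫ = 0 ∧ ⟪(J z), J (g i)⟫ = 0)) := by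
    intro i hi
    have hb0a : ⟪x, g i⟫ = 0 := by
      rw [← gx, hg.1, if_neg]
      intro h; apply hi; rw [← h]; simp
    have hb0b : ⟪x, J (g i)⟫ = 0 := by rw [← gx]; exact hg.2 _ i
    have hb0c : ⟪(J x), g i⟫ = 0 := by rw [J_inner_left hJ, hb0b]; norm_num
    have hb0d : ⟪(J x), J (g i)⟫ = 0 := by rw [hJ.2]; exact hb0a
    have hb1a : ⟪y, g i⟫ = 0 := by
      rw [← gy, hg.1, if_neg]
      intro h; apply hi; rw [← h]; simp
    have hb1b : ⟪y, J (g i)⟫ = 0 := by rw [← gy]; exact hg.2 _ i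
    have hb1c : ⟪(J y), g i⟫ = 0 := by rw [J_inner_left hJ, hb1b]; norm_num
    have hb1d : ⟪(J y), J (g i)⟫ = 0 := by rw [hJ.2]; exact hb1a
    have hb2a : ⟪z, g i⟫ = 0 := by
      rw [← gz, hg.1, if_neg]
      intro h; apply hi; rw [← h]; simp
    have hb2b : ⟪z, J (g i)⟫ = 0 := by rw [← gz]; exact hg.2 _ i
    have hb2c : ⟪(J z), g i⟫ = 0 := by rw [J_inner_left hJ, hb2b]; norm_num
    have hb2d : ⟪(J z), J (g i)⟫ = 0 := by rw [hJ.2]; exact hb2a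
    exact ⟨⟨hb0a, hb0b⟩, ⟨hb1a, hb1b⟩, ⟨hb2a, hb2b⟩, ⟨hb0c, hb0d⟩, ⟨hb1c, hb1d⟩, ⟨hb2c, hb2d⟩⟩
  have tl0 : ∀ i : Fin m, ¬ (i : ℕ) < 3 → ⟪x, g i⟫ = 0 ∧ ⟪x, J (g i)⟫ = 0 := fun i hi => (tailsix i hi).1
  have tl1 : ∀ i : Fin m, ¬ (i : ℕ) < 3 → ⟪y, g i⟫ = 0 ∧ ⟪y, J (g i)⟫ = 0 := fun i hi => (tailsix i hi).2.1
  have tl2 : ∀ i : Fin m, ¬ (i : ℕ) < 3 → ⟪z, g i⟫ = 0 ∧ ⟪z, J (g i)⟫ = 0 := fun i hi => (tailsix i hi).2.2.1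
  have tl3 : ∀ i : Fin m, ¬ (i : ℕ) < 3 → ⟪(J x), g i⟫ = 0 ∧ ⟪(J x), J (g i)⟫ = 0 := fun i hi => (tailsix i hi).2.2.2.1
  have tl4 : ∀ i : Fin m, ¬ (i : ℕ) < 3 → ⟪(J y), g i⟫ = 0 ∧ ⟪(J y), J (g i)⟫ = 0 := fun i hi => (tailsix i hi).2.2.2.2.1
  have tl5 : ∀ i : Fin m, ¬ (i : ℕ) < 3 → ⟪(J z), g i⟫ = 0 ∧ ⟪(J z), J (g i)⟫ = 0 := fun i hi => (tailsix i hi).2.2.2.2.2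
  have hk0 := rot_eq hJ hm hF g hg x y z (3/5 : ℝ) (4/5 : ℝ) (by norm_num)
    ip00 ip11 ip22 ip01 ip02 ip12 ip03 ip14 ip25 ip04 ip05 ip15 tl0 tl1 tl2
  simp only [map_add, map_smul, map_neg, LinearMap.add_apply, LinearMap.smul_apply, LinearMap.neg_apply, smul_eq_mul, hJ.1] at hk0
  have hk1 := rot_eq hJ hm hF g hg x y z (4/5 : ℝ) (3/5 : ℝ) (by norm_num)
    ip00 ip11 ip22 ip01 ip02 ip12 ip03 ip14 ip25 ip04 ip05 ip15 tl0 tl1 tl2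
  simp only [map_add, map_smul, map_neg, LinearMap.add_apply, LinearMap.smul_apply, LinearMap.neg_apply, smul_eq_mul, hJ.1] at hk1
  have hk2 := rot_eq hJ hm hF g hg x z y (3/5 : ℝ) (4/5 : ℝ) (by norm_num)
    ip00 ip22 ip11 ip02 ip01 ip21 ip03 ip25 ip14 ip05 ip04 ip24 tl0 tl2 tl1
  simp only [map_add, map_smul, map_neg, LinearMap.add_apply, LinearMap.smul_apply, LinearMap.neg_apply, smul_eq_mul, hJ.1] at hk2
  have hk3 := rot_eq hJ hm hF g hg x z y (4/5 : ℝ) (3/5 : ℝ) (by norm_num)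
    ip00 ip22 ip11 ip02 ip01 ip21 ip03 ip25 ip14 ip05 ip04 ip24 tl0 tl2 tl1
  simp only [map_add, map_smul, map_neg, LinearMap.add_apply, LinearMap.smul_apply, LinearMap.neg_apply, smul_eq_mul, hJ.1] at hk3
  have jp44 : ⟪(J y), J (J y)⟫ = 0 := by rw [hJ.1, inner_neg_right, ip41]; ring
  have jp04 : ⟪x, J (J y)⟫ = 0 := by rw [hJ.1, inner_neg_right, ip01]; ring
  have hk4 := rot_eq hJ hm hF g hg x (J y) z (3/5 : ℝ) (4/5 : ℝ) (by norm_num)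
    ip00 ip44 ip22 ip04 ip02 ip42 ip03 jp44 ip25 jp04 ip05 ip45 tl0 tl4 tl2
  simp only [map_add, map_smul, map_neg, LinearMap.add_apply, LinearMap.smul_apply, LinearMap.neg_apply, smul_eq_mul, hJ.1] at hk4
  have hk5 := rot_eq hJ hm hF g hg x (J y) z (4/5 : ℝ) (3/5 : ℝ) (by norm_num)
    ip00 ip44 ip22 ip04 ip02 ip42 ip03 jp44 ip25 jp04 ip05 ip45 tl0 tl4 tl2
  simp only [map_add, map_smul, map_neg, LinearMap.add_apply, LinearMap.smul_apply, LinearMap.neg_apply, smul_eq_mul, hJ.1] at hk5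
  have jp55 : ⟪(J z), J (J z)⟫ = 0 := by rw [hJ.1, inner_neg_right, ip52]; ring
  have jp05 : ⟪x, J (J z)⟫ = 0 := by rw [hJ.1, inner_neg_right, ip02]; ring
  have hk6 := rot_eq hJ hm hF g hg x (J z) y (3/5 : ℝ) (4/5 : ℝ) (by norm_num)
    ip00 ip55 ip11 ip05 ip01 ip51 ip03 jp55 ip14 jp05 ip04 ip54 tl0 tl5 tl1
  simp only [map_add, map_smul, map_neg, LinearMap.add_apply, LinearMap.smul_apply, LinearMap.neg_apply, smul_eq_mul, hJ.1] at hk6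
  have hk7 := rot_eq hJ hm hF g hg x (J z) y (4/5 : ℝ) (3/5 : ℝ) (by norm_num)
    ip00 ip55 ip11 ip05 ip01 ip51 ip03 jp55 ip14 jp05 ip04 ip54 tl0 tl5 tl1
  simp only [map_add, map_smul, map_neg, LinearMap.add_apply, LinearMap.smul_apply, LinearMap.neg_apply, smul_eq_mul, hJ.1] at hk7
  have jp15 : ⟪y, J (J z)⟫ = 0 := by rw [hJ.1, inner_neg_right, ip12]; ring
  have hk8 := rot_eq hJ hm hF g hg y (J z) x (3/5 : ℝ) (4/5 : ℝ) (by norm_num)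
    ip11 ip55 ip00 ip15 ip10 ip50 ip14 jp55 ip03 jp15 ip13 ip53 tl1 tl5 tl0
  simp only [map_add, map_smul, map_neg, LinearMap.add_apply, LinearMap.smul_apply, LinearMap.neg_apply, smul_eq_mul, hJ.1] at hk8
  have cp16 : ⟪((3/5 : ℝ) • y + (4/5 : ℝ) • (J z)), ((3/5 : ℝ) • y + (4/5 : ℝ) • (J z))⟫ = 1 := by
    norm_num [inner_add_left, inner_add_right, real_inner_smul_left, real_inner_smul_right, ip11, ip15, ip51, ip55, -inner_self_eq_norm_sq_to_K]
  have cp17 : ⟪((-(4/5) : ℝ) • y + (3/5 : ℝ) • (J z)), ((-(4/5) : ℝ) • y + (3/5 : ℝ) • (J z))⟫ = 1 := by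
    norm_num [inner_add_left, inner_add_right, real_inner_smul_left, real_inner_smul_right, ip11, ip15, ip51, ip55, -inner_self_eq_norm_sq_to_K]
  have cp18 : ⟪x, ((3/5 : ℝ) • y + (4/5 : ℝ) • (J z))⟫ = 0 := by
    norm_num [inner_add_left, inner_add_right, real_inner_smul_left, real_inner_smul_right, ip01, ip05]
  have cp19 : ⟪x, ((-(4/5) : ℝ) • y + (3/5 : ℝ) • (J z))⟫ = 0 := by
    norm_num [inner_add_left, inner_add_right, real_inner_smul_left, real_inner_smul_right, ip01, ip05]
  have cp20 : ⟪((3/5 : ℝ) • y + (4/5 : ℝ) • (J z)), ((-(4/5) : ℝ) • y + (3/5 : ℝ) • (J z))⟫ = 0 := by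
    norm_num [inner_add_left, inner_add_right, real_inner_smul_left, real_inner_smul_right, ip11, ip15, ip51, ip55, -inner_self_eq_norm_sq_to_K]
  have cj16 : ⟪((3/5 : ℝ) • y + (4/5 : ℝ) • (J z)), J ((3/5 : ℝ) • y + (4/5 : ℝ) • (J z))⟫ = 0 := by
    norm_num [inner_add_left, inner_add_right, real_inner_smul_left, real_inner_smul_right, map_add, map_smul, ip14, ip54, jp15, jp55]
  have cj17 : ⟪((-(4/5) : ℝ) • y + (3/5 : ℝ) • (J z)), J ((-(4/5) : ℝ) • y + (3/5 : ℝ) • (J z))⟫ = 0 := by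
    norm_num [inner_add_left, inner_add_right, real_inner_smul_left, real_inner_smul_right, map_add, map_smul, ip14, ip54, jp15, jp55]
  have cj18 : ⟪x, J ((3/5 : ℝ) • y + (4/5 : ℝ) • (J z))⟫ = 0 := by
    norm_num [inner_add_left, inner_add_right, real_inner_smul_left, real_inner_smul_right, map_add, map_smul, ip04, jp05]
  have cj19 : ⟪x, J ((-(4/5) : ℝ) • y + (3/5 : ℝ) • (J z))⟫ = 0 := by
    norm_num [inner_add_left, inner_add_right, real_inner_smul_left, real_inner_smul_right, map_add, map_smul, ip04, jp05]
  have cj20 : ⟪((3/5 : ℝ) • y + (4/5 : ℝ) • (J z)), J ((-(4/5) : ℝ) • y + (3/5 : ℝ) • (J z))⟫ = 0 := by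
    norm_num [inner_add_left, inner_add_right, real_inner_smul_left, real_inner_smul_right, map_add, map_smul, ip14, ip54, jp15, jp55]
  have tlc5 : ∀ i : Fin m, ¬ (i : ℕ) < 3 → ⟪((3/5 : ℝ) • y + (4/5 : ℝ) • (J z)), g i⟫ = 0 ∧ ⟪((3/5 : ℝ) • y + (4/5 : ℝ) • (J z)), J (g i)⟫ = 0 := by
    intro i hi
    obtain ⟨qa0, qb0⟩ := tl1 i hi
    obtain ⟨qa1, qb1⟩ := tl5 i hi
    exact ⟨by simp [inner_add_left, real_inner_smul_left, qa0, qa1], by simp [inner_add_left, real_inner_smul_left, qb0, qb1]⟩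
  have tlc6 : ∀ i : Fin m, ¬ (i : ℕ) < 3 → ⟪((-(4/5) : ℝ) • y + (3/5 : ℝ) • (J z)), g i⟫ = 0 ∧ ⟪((-(4/5) : ℝ) • y + (3/5 : ℝ) • (J z)), J (g i)⟫ = 0 := by
    intro i hi
    obtain ⟨qa0, qb0⟩ := tl1 i hi
    obtain ⟨qa1, qb1⟩ := tl5 i hi
    exact ⟨by simp [inner_add_left, real_inner_smul_left, qa0, qa1], by simp [inner_add_left, real_inner_smul_left, qb0, qb1]⟩
  have hk9 := rot_eq hJ hm hF g hg x ((3/5 : ℝ) • y + (4/5 : ℝ) • (J z)) ((-(4/5) : ℝ) • y + (3/5 : ℝ) • (J z)) (3/5 : ℝ) (4/5 : ℝ) (by norm_num)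
    ip00 cp16 cp17 cp18 cp19 cp20 ip03 cj16 cj17 cj18 cj19 cj20 tl0 tlc5 tlc6
  simp only [map_add, map_smul, map_neg, LinearMap.add_apply, LinearMap.smul_apply, LinearMap.neg_apply, smul_eq_mul, hJ.1] at hk9
  have hk10 := rot_eq hJ hm hF g hg x ((3/5 : ℝ) • y + (4/5 : ℝ) • (J z)) ((-(4/5) : ℝ) • y + (3/5 : ℝ) • (J z)) (4/5 : ℝ) (3/5 : ℝ) (by norm_num)
    ip00 cp16 cp17 cp18 cp19 cp20 ip03 cj16 cj17 cj18 cj19 cj20 tl0 tlc5 tlc6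
  simp only [map_add, map_smul, map_neg, LinearMap.add_apply, LinearMap.smul_apply, LinearMap.neg_apply, smul_eq_mul, hJ.1] at hk10
  have cp21 : ⟪((3/5 : ℝ) • z + (4/5 : ℝ) • (J y)), ((3/5 : ℝ) • z + (4/5 : ℝ) • (J y))⟫ = 1 := by
    norm_num [inner_add_left, inner_add_right, real_inner_smul_left, real_inner_smul_right, ip22, ip24, ip42, ip44, -inner_self_eq_norm_sq_to_K]
  have cp22 : ⟪((-(4/5) : ℝ) • z + (3/5 : ℝ) • (J y)), ((-(4/5) : ℝ) • z + (3/5 : ℝ) • (J y))⟫ = 1 := by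
    norm_num [inner_add_left, inner_add_right, real_inner_smul_left, real_inner_smul_right, ip22, ip24, ip42, ip44, -inner_self_eq_norm_sq_to_K]
  have cp23 : ⟪x, ((3/5 : ℝ) • z + (4/5 : ℝ) • (J y))⟫ = 0 := by
    norm_num [inner_add_left, inner_add_right, real_inner_smul_left, real_inner_smul_right, ip02, ip04]
  have cp24 : ⟪x, ((-(4/5) : ℝ) • z + (3/5 : ℝ) • (J y))⟫ = 0 := by
    norm_num [inner_add_left, inner_add_right, real_inner_smul_left, real_inner_smul_right, ip02, ip04]
  have cp25 : ⟪((3/5 : ℝ) • z + (4/5 : ℝ) • (J y)), ((-(4/5) : ℝ) • z + (3/5 : ℝ) • (J y))⟫ = 0 := by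
    norm_num [inner_add_left, inner_add_right, real_inner_smul_left, real_inner_smul_right, ip22, ip24, ip42, ip44, -inner_self_eq_norm_sq_to_K]
  have jp24 : ⟪z, J (J y)⟫ = 0 := by rw [hJ.1, inner_neg_right, ip21]; ring
  have cj21 : ⟪((3/5 : ℝ) • z + (4/5 : ℝ) • (J y)), J ((3/5 : ℝ) • z + (4/5 : ℝ) • (J y))⟫ = 0 := by
    norm_num [inner_add_left, inner_add_right, real_inner_smul_left, real_inner_smul_right, map_add, map_smul, ip25, ip45, jp24, jp44]
  have cj22 : ⟪((-(4/5) : ℝ) • z + (3/5 : ℝ) • (J y)), J ((-(4/5) : ℝ) • z + (3/5 : ℝ) • (J y))⟫ = 0 := by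
    norm_num [inner_add_left, inner_add_right, real_inner_smul_left, real_inner_smul_right, map_add, map_smul, ip25, ip45, jp24, jp44]
  have cj23 : ⟪x, J ((3/5 : ℝ) • z + (4/5 : ℝ) • (J y))⟫ = 0 := by
    norm_num [inner_add_left, inner_add_right, real_inner_smul_left, real_inner_smul_right, map_add, map_smul, ip05, jp04]
  have cj24 : ⟪x, J ((-(4/5) : ℝ) • z + (3/5 : ℝ) • (J y))⟫ = 0 := by
    norm_num [inner_add_left, inner_add_right, real_inner_smul_left, real_inner_smul_right, map_add, map_smul, ip05, jp04]
  have cj25 : ⟪((3/5 : ℝ) • z + (4/5 : ℝ) • (J y)), J ((-(4/5) : ℝ) • z + (3/5 : ℝ) • (J y))⟫ = 0 := by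
    norm_num [inner_add_left, inner_add_right, real_inner_smul_left, real_inner_smul_right, map_add, map_smul, ip25, ip45, jp24, jp44]
  have tlc7 : ∀ i : Fin m, ¬ (i : ℕ) < 3 → ⟪((3/5 : ℝ) • z + (4/5 : ℝ) • (J y)), g i⟫ = 0 ∧ ⟪((3/5 : ℝ) • z + (4/5 : ℝ) • (J y)), J (g i)⟫ = 0 := by
    intro i hi
    obtain ⟨qa0, qb0⟩ := tl2 i hi
    obtain ⟨qa1, qb1⟩ := tl4 i hi
    exact ⟨by simp [inner_add_left, real_inner_smul_left, qa0, qa1], by simp [inner_add_left, real_inner_smul_left, qb0, qb1]⟩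
  have tlc8 : ∀ i : Fin m, ¬ (i : ℕ) < 3 → ⟪((-(4/5) : ℝ) • z + (3/5 : ℝ) • (J y)), g i⟫ = 0 ∧ ⟪((-(4/5) : ℝ) • z + (3/5 : ℝ) • (J y)), J (g i)⟫ = 0 := by
    intro i hi
    obtain ⟨qa0, qb0⟩ := tl2 i hi
    obtain ⟨qa1, qb1⟩ := tl4 i hi
    exact ⟨by simp [inner_add_left, real_inner_smul_left, qa0, qa1], by simp [inner_add_left, real_inner_smul_left, qb0, qb1]⟩
  have hk11 := rot_eq hJ hm hF g hg x ((3/5 : ℝ) • z + (4/5 : ℝ) • (J y)) ((-(4/5) : ℝ) • z + (3/5 : ℝ) • (J y)) (3/5 : ℝ) (4/5 : ℝ) (by norm_num)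
    ip00 cp21 cp22 cp23 cp24 cp25 ip03 cj21 cj22 cj23 cj24 cj25 tl0 tlc7 tlc8
  simp only [map_add, map_smul, map_neg, LinearMap.add_apply, LinearMap.smul_apply, LinearMap.neg_apply, smul_eq_mul, hJ.1] at hk11
  have hk12 := rot_eq hJ hm hF g hg x ((3/5 : ℝ) • z + (4/5 : ℝ) • (J y)) ((-(4/5) : ℝ) • z + (3/5 : ℝ) • (J y)) (4/5 : ℝ) (3/5 : ℝ) (by norm_num)
    ip00 cp21 cp22 cp23 cp24 cp25 ip03 cj21 cj22 cj23 cj24 cj25 tl0 tlc7 tlc8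
  simp only [map_add, map_smul, map_neg, LinearMap.add_apply, LinearMap.smul_apply, LinearMap.neg_apply, smul_eq_mul, hJ.1] at hk12
  linear_combination (norm := ring1)
    - (625/6144 : ℝ) * hk0
    - (625/6144 : ℝ) * hk1
    - (625/6144 : ℝ) * hk2
    - (625/6144 : ℝ) * hk3
    - (625/3456 : ℝ) * hk4
    - (625/3456 : ℝ) * hk5
    - (625/3456 : ℝ) * hk6
    - (625/3456 : ℝ) * hk7
    + (25/96 : ℝ) * hk8
    + (15625/55296 : ℝ) * hk9
    + (15625/55296 : ℝ) * hk10
    + (15625/55296 : ℝ) * hk11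
    + (15625/55296 : ℝ) * hk12
    + (1 : ℝ) * (hR.bianchi x (J x) y z)
    - (15/8 : ℝ) * (kshift hJ hR x y x z)
    + (3/50 : ℝ) * (hR.skew₂ y (J y) (J y) y)
    - (3/50 : ℝ) * (hR.skew₂ z (J z) (J z) z)
    - (3/50 : ℝ) * (hR.skew₁ (J y) y y (J y))
    + (3/50 : ℝ) * (hR.skew₁ (J z) z z (J z))
    - (2/25 : ℝ) * (hR.kahler y (J y) y z)
    + (2/25 : ℝ) * (hR.symm y (J y) y z)
    - (2/25 : ℝ) * (hR.skew₂ y (J y) z y)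
    + (2/25 : ℝ) * (hR.symm y (J y) y z)
    - (2/25 : ℝ) * (hR.skew₂ y z (J y) y)
    - (3/50 : ℝ) * (hR.kahler y z y z)
    - (3/50 : ℝ) * (hR.skew₂ y z z y)
    + (2/25 : ℝ) * (hR.skew₁ (J z) (J y) (J y) y)
    - (2/25 : ℝ) * (hR.skew₂ (J y) (J z) (J y) y)
    + (2/25 : ℝ) * (hR.symm (J y) (J z) y (J y))
    - (2/25 : ℝ) * (hR.kahler y (J y) y z)
    + (2/25 : ℝ) * (hR.symm y (J y) y z)
    - (3/50 : ℝ) * (hR.skew₁ (J z) (J y) (J y) (J z))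
    - (3/50 : ℝ) * (hR.kahler (J y) (J z) y z)
    + (3/50 : ℝ) * (hR.symm (J y) (J z) y z)
    - (3/50 : ℝ) * (hR.kahler y z y z)
    + (3/50 : ℝ) * (hR.skew₁ (J z) (J y) z y)
    - (3/50 : ℝ) * (hR.skew₂ (J y) (J z) z y)
    + (3/50 : ℝ) * (hR.symm (J y) (J z) y z)
    - (3/50 : ℝ) * (hR.kahler y z y z)
    - (9/200 : ℝ) * (hR.skew₁ (J z) (J y) z (J z))
    + (9/200 : ℝ) * (hR.symm (J y) (J z) z (J z))
    - (9/200 : ℝ) * (hR.kahler z (J z) y z)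
    + (9/200 : ℝ) * (hR.symm z (J z) y z)
    + (3/50 : ℝ) * (hR.skew₁ (J z) z (J y) y)
    - (3/50 : ℝ) * (hR.skew₂ z (J z) (J y) y)
    + (3/50 : ℝ) * (hR.symm z (J z) y (J y))
    - (9/200 : ℝ) * (hR.skew₁ (J z) z (J y) (J z))
    - (9/200 : ℝ) * (hR.kahler z (J z) y z)
    + (9/200 : ℝ) * (hR.symm z (J z) y z)
    + (9/200 : ℝ) * (hR.skew₁ (J z) z z y)
    - (9/200 : ℝ) * (hR.skew₂ z (J z) z y)
    + (9/200 : ℝ) * (hR.symm z (J z) y z)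
    + (1/8 : ℝ) * (hR.kahler x (J x) y z)
    + (1/8 : ℝ) * (hR.skew₂ x (J x) z y)
    + (1/8 : ℝ) * (hR.kahler x (J y) x z)
    - (1/8 : ℝ) * (hR.symm x (J y) x z)
    + (1/8 : ℝ) * (hR.skew₂ x (J y) z x)
    - (1/8 : ℝ) * (hR.symm x (J y) x z)
    + (1/8 : ℝ) * (kshift hJ hR x z x y)
    + (1/8 : ℝ) * (hR.skew₂ x z (J y) x)
    - (1/8 : ℝ) * (hR.skew₁ y (J x) (J x) (J z))
    - (1/8 : ℝ) * (hR.kahler (J x) y x z)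
    + (1/8 : ℝ) * (hR.symm (J x) y x z)
    + (1/8 : ℝ) * (kshift hJ hR x z x y)
    + (1/8 : ℝ) * (hR.skew₁ y (J x) z x)
    - (1/8 : ℝ) * (hR.skew₂ (J x) y z x)
    + (1/8 : ℝ) * (hR.symm (J x) y x z)
    + (1/8 : ℝ) * (kshift hJ hR x z x y)
    + (1/8 : ℝ) * (hR.skew₂ y z (J x) x)
    - (1/8 : ℝ) * (hR.symm y z x (J x))
    - (1/8 : ℝ) * (hR.skew₁ (J z) (J x) (J x) y)
    + (1/8 : ℝ) * (hR.symm (J x) (J z) (J x) y)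
    - (1/8 : ℝ) * (hR.kahler (J x) y x z)
    + (1/8 : ℝ) * (hR.symm (J x) y x z)
    + (1/8 : ℝ) * (kshift hJ hR x z x y)
    - (1/8 : ℝ) * (hR.skew₁ (J z) (J x) (J y) x)
    + (1/8 : ℝ) * (hR.skew₂ (J x) (J z) (J y) x)
    - (1/8 : ℝ) * (hR.symm (J x) (J z) x (J y))
    + (1/8 : ℝ) * (hR.kahler x (J y) x z)
    - (1/8 : ℝ) * (hR.symm x (J y) x z)
    - (1/8 : ℝ) * (hR.skew₁ (J z) (J y) (J x) x)
    + (1/8 : ℝ) * (hR.skew₂ (J y) (J z) (J x) x)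
    - (1/8 : ℝ) * (hR.symm (J y) (J z) x (J x))
    + (1/8 : ℝ) * (hR.kahler x (J x) y z)
    - (1/8 : ℝ) * (hR.skew₂ x (J x) (J z) (J y))
    - (1/8 : ℝ) * (hR.kahler x (J x) y z)
    + (1/8 : ℝ) * (hR.kahler x (J z) x y)
    - (1/8 : ℝ) * (hR.symm x (J z) x y)
    + (1/8 : ℝ) * (hR.skew₂ x (J z) y x)
    - (1/8 : ℝ) * (hR.symm x (J z) x y)
    + (1/8 : ℝ) * (hR.skew₂ x y (J z) x)
    - (1/8 : ℝ) * (hR.skew₁ z (J x) (J x) (J y))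
    - (1/8 : ℝ) * (hR.kahler (J x) z x y)
    + (1/8 : ℝ) * (hR.symm (J x) z x y)
    + (1/8 : ℝ) * (kshift hJ hR x y x z)
    + (1/8 : ℝ) * (hR.skew₁ z (J x) y x)
    - (1/8 : ℝ) * (hR.skew₂ (J x) z y x)
    + (1/8 : ℝ) * (hR.symm (J x) z x y)
    + (1/8 : ℝ) * (kshift hJ hR x y x z)
    + (9/200 : ℝ) * (hR.skew₂ z (J z) (J z) (J y))
    + (9/200 : ℝ) * (hR.kahler z (J z) y z)
    - (9/200 : ℝ) * (hR.symm z (J z) y z)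
    - (9/200 : ℝ) * (hR.symm z (J z) y z)
    - (3/50 : ℝ) * (hR.symm z (J z) y (J y))
    + (1/8 : ℝ) * (hR.skew₁ z y (J x) x)
    - (1/8 : ℝ) * (hR.skew₂ y z (J x) x)
    + (1/8 : ℝ) * (hR.symm y z x (J x))
    - (9/200 : ℝ) * (hR.skew₁ z y (J z) z)
    + (9/200 : ℝ) * (hR.skew₂ y z (J z) z)
    - (3/50 : ℝ) * (hR.skew₁ z y (J z) (J y))
    + (3/50 : ℝ) * (hR.skew₂ y z (J z) (J y))
    + (3/50 : ℝ) * (hR.kahler y z y z)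
    + (3/50 : ℝ) * (hR.skew₁ z y y z)
    + (2/25 : ℝ) * (hR.skew₁ z y y (J y))
    - (1/8 : ℝ) * (hR.skew₁ (J y) (J x) (J x) z)
    + (1/8 : ℝ) * (hR.symm (J x) (J y) (J x) z)
    - (1/8 : ℝ) * (hR.kahler (J x) z x y)
    + (1/8 : ℝ) * (hR.symm (J x) z x y)
    + (1/8 : ℝ) * (kshift hJ hR x y x z)
    - (1/8 : ℝ) * (hR.skew₁ (J y) (J x) (J z) x)
    + (1/8 : ℝ) * (hR.skew₂ (J x) (J y) (J z) x)
    - (1/8 : ℝ) * (hR.symm (J x) (J y) x (J z))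
    + (1/8 : ℝ) * (hR.kahler x (J z) x y)
    - (1/8 : ℝ) * (hR.symm x (J z) x y)
    - (1/8 : ℝ) * (hR.skew₂ (J y) (J z) (J x) x)
    + (1/8 : ℝ) * (hR.symm (J y) (J z) x (J x))
    - (1/8 : ℝ) * (hR.kahler x (J x) y z)
    + (9/200 : ℝ) * (hR.skew₂ (J y) (J z) (J z) z)
    - (9/200 : ℝ) * (hR.symm (J y) (J z) z (J z))
    + (9/200 : ℝ) * (hR.kahler z (J z) y z)
    - (9/200 : ℝ) * (hR.symm z (J z) y z)
    + (3/50 : ℝ) * (hR.skew₂ (J y) (J z) (J z) (J y))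
    + (3/50 : ℝ) * (hR.kahler (J y) (J z) y z)
    - (3/50 : ℝ) * (hR.symm (J y) (J z) y z)
    + (3/50 : ℝ) * (hR.kahler y z y z)
    - (3/50 : ℝ) * (hR.symm (J y) (J z) y z)
    + (3/50 : ℝ) * (hR.kahler y z y z)
    - (2/25 : ℝ) * (hR.symm (J y) (J z) y (J y))
    + (2/25 : ℝ) * (hR.kahler y (J y) y z)
    - (2/25 : ℝ) * (hR.symm y (J y) y z)
    - (3/50 : ℝ) * (hR.skew₁ (J y) y (J z) z)
    + (3/50 : ℝ) * (hR.skew₂ y (J y) (J z) z)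
    - (2/25 : ℝ) * (hR.skew₁ (J y) y (J z) (J y))
    + (2/25 : ℝ) * (hR.skew₂ y (J y) (J z) (J y))
    + (2/25 : ℝ) * (hR.kahler y (J y) y z)
    - (2/25 : ℝ) * (hR.symm y (J y) y z)
    + (2/25 : ℝ) * (hR.skew₁ (J y) y y z)
    - (2/25 : ℝ) * (hR.symm y (J y) y z)
    - (1 : ℝ) * (hR.symm (J x) y x z)
    - (1 : ℝ) * (kshift hJ hR x z x y)
    - (1 : ℝ) * (hR.skew₁ y x (J x) z)
    + (1 : ℝ) * (kshift hJ hR x y x z)
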